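/- arXiv:2311.02974 — 3 statements merged into one kernel-verified Lean document; each statement's English description precedes it below -/
import Mathlib

section
/- Every permutation π ∈ S_n(132,321) with its maximum in position k, 1 < k < n, has the form π = (α ⊕ 1) ⊖ β where α ⊕ 1 ∈ S_k and β ∈ S_{n-k} are both increasing permutations; in particular π_{k+1} < π_{k+2} < ... < π_n and π_i = n - k + i for 1 ≤ i ≤ k-1. -/
/-- The value of `π` at position `i` (0-based), as a natural number; `0` if out of range. -/
def pv {n : ℕ} (π : Equiv.Perm (Fin n)) (i : ℕ) : ℕ :=
  if h : i < n then (π ⟨i, h⟩ : ℕ) else 0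

/-- The set of ascent positions (0-based) of `π`. -/
def ascents {n : ℕ} (π : Equiv.Perm (Fin n)) : Finset ℕ :=
  (Finset.range (n - 1)).filter fun i => pv π i < pv π (i + 1)

/-- The set of descent positions (0-based) of `π`. -/
def descents {n : ℕ} (π : Equiv.Perm (Fin n)) : Finset ℕ :=
  (Finset.range (n - 1)).filter fun i => pv π (i + 1) < pv π i

def asc {n : ℕ} (π : Equiv.Perm (Fin n)) : ℕ := (ascents π).card

def des {n : ℕ} (π : Equiv.Perm (Fin n)) : ℕ := (descents π).card

/-- The maximum number of non-overlapping ascents of `π`. -/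
noncomputable def MNA {n : ℕ} (π : Equiv.Perm (Fin n)) : ℕ :=
  sSup {k | ∃ S ⊆ ascents π, S.card = k ∧ ∀ i ∈ S, ∀ j ∈ S, i < j → i + 1 < j}

/-- The maximum number of non-overlapping descents of `π`. -/
noncomputable def MND {n : ℕ} (π : Equiv.Perm (Fin n)) : ℕ :=
  sSup {k | ∃ S ⊆ descents π, S.card = k ∧ ∀ i ∈ S, ∀ j ∈ S, i < j → i + 1 < j}

def IsLRMax {n : ℕ} (π : Equiv.Perm (Fin n)) (i : Fin n) : Prop := ∀ j, j < i → π j < π i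
def IsRLMax {n : ℕ} (π : Equiv.Perm (Fin n)) (i : Fin n) : Prop := ∀ j, i < j → π j < π i
def IsLRMin {n : ℕ} (π : Equiv.Perm (Fin n)) (i : Fin n) : Prop := ∀ j, j < i → π i < π j
def IsRLMin {n : ℕ} (π : Equiv.Perm (Fin n)) (i : Fin n) : Prop := ∀ j, i < j → π i < π j

noncomputable def lrmax {n : ℕ} (π : Equiv.Perm (Fin n)) : ℕ := Nat.card {i : Fin n // IsLRMax π i}
noncomputable def rlmax {n : ℕ} (π : Equiv.Perm (Fin n)) : ℕ := Nat.card {i : Fin n // IsRLMax π i}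
noncomputable def lrmin {n : ℕ} (π : Equiv.Perm (Fin n)) : ℕ := Nat.card {i : Fin n // IsLRMin π i}
noncomputable def rlmin {n : ℕ} (π : Equiv.Perm (Fin n)) : ℕ := Nat.card {i : Fin n // IsRLMin π i}

def Avoids123 {n : ℕ} (π : Equiv.Perm (Fin n)) : Prop :=
  ¬ ∃ i j k : Fin n, i < j ∧ j < k ∧ π i < π j ∧ π j < π k
def Avoids132 {n : ℕ} (π : Equiv.Perm (Fin n)) : Prop :=
  ¬ ∃ i j k : Fin n, i < j ∧ j < k ∧ π i < π k ∧ π k < π j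
def Avoids213 {n : ℕ} (π : Equiv.Perm (Fin n)) : Prop :=
  ¬ ∃ i j k : Fin n, i < j ∧ j < k ∧ π j < π i ∧ π i < π k
def Avoids231 {n : ℕ} (π : Equiv.Perm (Fin n)) : Prop :=
  ¬ ∃ i j k : Fin n, i < j ∧ j < k ∧ π k < π i ∧ π i < π j
def Avoids312 {n : ℕ} (π : Equiv.Perm (Fin n)) : Prop :=
  ¬ ∃ i j k : Fin n, i < j ∧ j < k ∧ π j < π k ∧ π k < π i
def Avoids321 {n : ℕ} (π : Equiv.Perm (Fin n)) : Prop :=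
  ¬ ∃ i j k : Fin n, i < j ∧ j < k ∧ π k < π j ∧ π j < π i

theorem structure_avoid_132_321 (n : ℕ) (π : Equiv.Perm (Fin n))
    (h132 : Avoids132 π) (h321 : Avoids321 π) (k : Fin n)
    (hmax : (π k : ℕ) = n - 1) (hk1 : 0 < (k : ℕ)) (hk2 : (k : ℕ) < n - 1) :
    (∀ i j : Fin n, k < i → i < j → π i < π j) ∧
    (∀ i : Fin n, i < k → (π i : ℕ) = n - 1 - (k : ℕ) + (i : ℕ)) := by
  have hmaxlt : ∀ m : Fin n, m ≠ k → π m < π k := by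
    intro m hm
    have h1 : (π m : ℕ) ≤ n - 1 := by have := (π m).isLt; omega
    have h2 : π m ≠ π k := fun h => hm (π.injective h)
    have h3 : (π m : ℕ) ≠ (π k : ℕ) := fun h => h2 (Fin.ext h)
    exact Fin.lt_def.mpr (by omega)
  have partA : ∀ i j : Fin n, k < i → i < j → π i < π j := by
    intro i j hki hij
    by_contra h
    have hne : π j ≠ π i := fun h => (lt_irrefl i (by rw [π.injective h] at hij; exact hij))
    have hji : π j < π i := lt_of_le_of_ne (not_lt.mp h) hne
    exact h321 ⟨k, i, j, hki, hij, hji, hmaxlt i (Fin.ne_of_gt hki)⟩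
  have L1 : ∀ i m : Fin n, i < k → k < m → π m < π i := by
    intro i m hik hkm
    by_contra h
    have hne : π i ≠ π m := fun h => absurd (π.injective h) (ne_of_lt (lt_trans hik hkm))
    have him : π i < π m := lt_of_le_of_ne (not_lt.mp h) hne
    exact h132 ⟨i, k, m, hik, hkm, him, hmaxlt m (Fin.ne_of_gt hkm)⟩
  have L2 : ∀ i j : Fin n, i < j → j < k → π i < π j := by
    intro i j hij hjk
    by_contra h
    have hne : π j ≠ π i := fun h => (lt_irrefl i (by rw [π.injective h] at hij; exact hij))
    have hji : π j < π i := lt_of_le_of_ne (not_lt.mp h) hne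
    have hkn : (k : ℕ) + 1 < n := by have := k.isLt; omega
    set m : Fin n := ⟨(k : ℕ) + 1, hkn⟩ with hm
    have hkm : k < m := Fin.lt_def.mpr (by simp [hm])
    exact h321 ⟨i, j, m, hij, lt_trans hjk hkm, L1 j m hjk hkm, hji⟩
  refine ⟨partA, ?_⟩
  intro i hik
  -- lower bound
  have hlow : (i : ℕ) + (n - 1 - (k : ℕ)) ≤ (π i : ℕ) := by
    have hdisj : Disjoint (Finset.Iio i) (Finset.Ioi k) := by
      rw [Finset.disjoint_left]
      intro a ha hb
      rw [Finset.mem_Iio] at ha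
      rw [Finset.mem_Ioi] at hb
      exact absurd (lt_trans (lt_trans hb ha) hik) (lt_irrefl k)
    have hcard : (Finset.Iio i ∪ Finset.Ioi k).card = (i : ℕ) + (n - 1 - (k : ℕ)) := by
      rw [Finset.card_union_of_disjoint hdisj, Fin.card_Iio, Fin.card_Ioi]
    calc (i : ℕ) + (n - 1 - (k : ℕ)) = (Finset.Iio i ∪ Finset.Ioi k).card := hcard.symm
      _ ≤ (Finset.Iio (π i)).card := by
          apply Finset.card_le_card_of_injOn π
          · intro a ha
            rw [Finset.mem_coe, Finset.mem_union, Finset.mem_Iio, Finset.mem_Ioi] at ha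
            rw [Finset.mem_coe, Finset.mem_Iio]
            rcases ha with h | h
            · exact L2 a i h hik
            · exact L1 i a hik h
          · exact (π.injective.injOn)
      _ = (π i : ℕ) := Fin.card_Iio _
  -- upper bound
  have hup : (k : ℕ) - (i : ℕ) ≤ n - 1 - (π i : ℕ) := by
    calc (k : ℕ) - (i : ℕ) = (Finset.Ioc i k).card := (Fin.card_Ioc _ _).symm
      _ ≤ (Finset.Ioi (π i)).card := by
          apply Finset.card_le_card_of_injOn π
          · intro a ha
            rw [Finset.mem_coe, Finset.mem_Ioc] at ha
            rw [Finset.mem_coe, Finset.mem_Ioi]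
            rcases lt_or_eq_of_le ha.2 with h | h
            · exact L2 i a ha.1 h
            · rw [h]; exact hmaxlt i (Fin.ne_of_lt hik)
          · exact (π.injective.injOn)
      _ = n - 1 - (π i : ℕ) := Fin.card_Ioi _
  have h1 : (π i : ℕ) < n := (π i).isLt
  have h2 : (i : ℕ) < (k : ℕ) := Fin.lt_def.mp hik
  omega
end

section
/- The map g: S_n(231,312) → S_n(213,231), defined by requiring that g(π) has a right-to-left maximum in position n+1-i if and only if π has a left-to-right maximum in position i, is a well-defined bijection satisfying asc(π) = des(g(π)), des(π) = asc(g(π)), MNA(π) = MND(g(π)) and MND(π) = MNA(g(π)). -/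
namespace GBij
open Finset

/-! ### run-start and run-end functions -/

def runSP (D : Finset ℕ) (i x : ℕ) : Prop := ∀ m, m < i → x ≤ m → m ∈ D

instance (D : Finset ℕ) (i : ℕ) : DecidablePred (runSP D i) := fun _ =>
  inferInstanceAs (Decidable (∀ m < i, _ ≤ m → m ∈ D))

lemma runSP_self (D : Finset ℕ) (i : ℕ) : runSP D i i := fun m h1 h2 => absurd h1 (by omega)

def rA (D : Finset ℕ) (i : ℕ) : ℕ := Nat.find ⟨i, runSP_self D i⟩

lemma rA_le (D : Finset ℕ) (i : ℕ) : rA D i ≤ i := Nat.find_le (runSP_self D i)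

lemma rA_mem (D : Finset ℕ) (i : ℕ) : ∀ m, m < i → rA D i ≤ m → m ∈ D :=
  Nat.find_spec (⟨i, runSP_self D i⟩ : ∃ x, runSP D i x)

lemma rA_min (D : Finset ℕ) (i : ℕ) (h : 0 < rA D i) : (rA D i - 1) ∉ D := by
  intro hD
  have h2 := Nat.find_min (⟨i, runSP_self D i⟩ : ∃ x, runSP D i x) (m := rA D i - 1) (Nat.sub_lt h one_pos)
  apply h2
  intro m hm1 hm2
  rcases eq_or_lt_of_le hm2 with h' | h'
  · rwa [← h']
  · exact rA_mem D i m hm1 (by omega)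

def runEP (D : Finset ℕ) (i x : ℕ) : Prop := ∀ m, m < x → i ≤ m → m ∈ D

instance (D : Finset ℕ) (i : ℕ) : DecidablePred (runEP D i) := fun x =>
  inferInstanceAs (Decidable (∀ m < x, i ≤ m → m ∈ D))

lemma runEP_small (D : Finset ℕ) (i : ℕ) {x : ℕ} (h : x ≤ i) : runEP D i x :=
  fun m h1 h2 => absurd h1 (by omega)

def rB (n : ℕ) (D : Finset ℕ) (i : ℕ) : ℕ := Nat.findGreatest (runEP D i) (n - 1)

lemma rB_ge {n : ℕ} (D : Finset ℕ) {i : ℕ} (hi : i ≤ n - 1) : i ≤ rB n D i :=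
  Nat.le_findGreatest hi (runEP_small D i le_rfl)

lemma rB_le (n : ℕ) (D : Finset ℕ) (i : ℕ) : rB n D i ≤ n - 1 := Nat.findGreatest_le _

lemma rB_mem (n : ℕ) (D : Finset ℕ) (i : ℕ) : ∀ m, m < rB n D i → i ≤ m → m ∈ D :=
  Nat.findGreatest_spec (Nat.zero_le _) (runEP_small D i (Nat.zero_le _))

lemma rB_max (n : ℕ) (D : Finset ℕ) (i : ℕ) (h : rB n D i < n - 1) : rB n D i ∉ D := by
  intro hD
  have h2 := Nat.findGreatest_is_greatest (P := runEP D i) (n := n - 1)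
    (k := rB n D i + 1) (Nat.lt_succ_self _) (by omega)
  apply h2
  intro m hm1 hm2
  rcases Nat.lt_or_ge m (rB n D i) with h' | h'
  · exact rB_mem n D i m h' hm2
  · have : m = rB n D i := by omega
    rwa [this]

lemma run_mem (n : ℕ) (D : Finset ℕ) (i : ℕ) :
    ∀ m, rA D i ≤ m → m < rB n D i → m ∈ D := by
  intro m h1 h2
  rcases Nat.lt_or_ge m i with h' | h'
  · exact rA_mem D i m h' h1
  · exact rB_mem n D i m h2 h'

lemma rA_congr (D : Finset ℕ) {i j : ℕ} (hij : i ≤ j)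
    (h : ∀ m, i ≤ m → m < j → m ∈ D) : rA D i = rA D j := by
  apply le_antisymm
  · apply Nat.find_le
    intro m hm1 hm2
    exact rA_mem D j m (by omega) hm2
  · apply Nat.find_le
    intro m hm1 hm2
    rcases Nat.lt_or_ge m i with h' | h'
    · exact rA_mem D i m h' hm2
    · exact h m h' hm1

lemma rB_congr {n : ℕ} (D : Finset ℕ) {i j : ℕ} (hij : i ≤ j) (hj : j ≤ n - 1)
    (h : ∀ m, i ≤ m → m < j → m ∈ D) : rB n D i = rB n D j := by
  apply le_antisymm
  · apply Nat.le_findGreatest (rB_le n D i)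
    intro m hm1 hm2
    exact rB_mem n D i m hm1 (by omega)
  · apply Nat.le_findGreatest (rB_le n D j)
    intro m hm1 hm2
    rcases Nat.lt_or_ge m j with h' | h'
    · exact h m hm2 h'
    · exact rB_mem n D j m hm1 h'

lemma run_const {n : ℕ} (D : Finset ℕ) {i j : ℕ} (hin : i ≤ n - 1)
    (h1 : rA D i ≤ j) (h2 : j ≤ rB n D i) :
    rA D j = rA D i ∧ rB n D j = rB n D i := by
  have hAle := rA_le D i
  have hBge := rB_ge D (n := n) hin
  have hjn : j ≤ n - 1 := le_trans h2 (rB_le n D i)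
  rcases Nat.le_total i j with h | h
  · exact ⟨(rA_congr D h fun m hm1 hm2 => run_mem n D i m (by omega) (by omega)).symm,
      (rB_congr D h hjn fun m hm1 hm2 => run_mem n D i m (by omega) (by omega)).symm⟩
  · exact ⟨rA_congr D h fun m hm1 hm2 => run_mem n D i m (by omega) (by omega),
      rB_congr D h hin fun m hm1 hm2 => run_mem n D i m (by omega) (by omega)⟩

/-! ### the permutation built from a descent set -/

def gf (n : ℕ) (D : Finset ℕ) : Fin n → Fin n := fun i =>
  ⟨rA D i + rB n D i - i, by
    have h1 := rA_le D (i : ℕ)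
    have h2 := rB_le n D (i : ℕ)
    have h3 := i.2
    omega⟩

lemma gf_invol (n : ℕ) (D : Finset ℕ) : Function.Involutive (gf n D) := by
  intro i
  have hin : (i : ℕ) ≤ n - 1 := by have := i.2; omega
  have hA := rA_le D (i : ℕ)
  have hB := rB_ge D (n := n) hin
  have hc := run_const (n := n) D hin (i := (i : ℕ)) (j := rA D i + rB n D i - i)
    (by omega) (by omega)
  apply Fin.ext
  show rA D (rA D i + rB n D i - i) + rB n D (rA D i + rB n D i - i)
      - (rA D i + rB n D i - i) = (i : ℕ)
  rw [hc.1, hc.2]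
  omega

def permD (n : ℕ) (D : Finset ℕ) : Equiv.Perm (Fin n) := (gf_invol n D).toPerm

lemma permD_apply (n : ℕ) (D : Finset ℕ) (i : Fin n) :
    (permD n D i : ℕ) = rA D i + rB n D i - i := rfl

/-! ### dichotomy -/

lemma permD_lt_same (n : ℕ) (D : Finset ℕ) {i j : Fin n} (hij : i < j)
    (h : ∀ m, (i : ℕ) ≤ m → m < (j : ℕ) → m ∈ D) : permD n D j < permD n D i := by
  have hij' : (i : ℕ) ≤ (j : ℕ) := le_of_lt hij
  have hjn : (j : ℕ) ≤ n - 1 := by have := j.2; omega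
  have hA := rA_congr D hij' h
  have hB := rB_congr (n := n) D hij' hjn h
  have hAle := rA_le D (i : ℕ)
  have hBge := rB_ge D (n := n) hjn
  rw [Fin.lt_def, permD_apply, permD_apply, ← hA, ← hB]
  have : (i : ℕ) < (j : ℕ) := hij
  omega

lemma permD_lt_diff (n : ℕ) (D : Finset ℕ) {i j : Fin n} (hij : i < j)
    {m : ℕ} (hm1 : (i : ℕ) ≤ m) (hm2 : m < (j : ℕ)) (hm3 : m ∉ D) :
    permD n D i < permD n D j := by
  have hjn : (j : ℕ) ≤ n - 1 := by have := j.2; omega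
  have hBi : rB n D i ≤ m := by
    by_contra h
    exact hm3 (rB_mem n D i m (by omega) hm1)
  have hAj : m < rA D j := by
    by_contra h
    exact hm3 (rA_mem D j m hm2 (by omega))
  have hAi := rA_le D (i : ℕ)
  have hBj := rB_ge D (n := n) hjn
  rw [Fin.lt_def, permD_apply, permD_apply]
  omega

lemma permD_run_cases (D : Finset ℕ) (i j : ℕ) :
    (∀ m, i ≤ m → m < j → m ∈ D) ∨ ∃ m, i ≤ m ∧ m < j ∧ m ∉ D := by
  by_cases h : ∀ m, i ≤ m → m < j → m ∈ D
  · exact Or.inl h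
  · right; push_neg at h; exact h

lemma permD_avoids_aux (n : ℕ) (D : Finset ℕ) {i j : Fin n} (hij : i < j) :
    (permD n D i < permD n D j ↔ ∃ m, (i : ℕ) ≤ m ∧ m < (j : ℕ) ∧ m ∉ D) := by
  rcases permD_run_cases D (i : ℕ) (j : ℕ) with h | h
  · constructor
    · intro hlt
      exact absurd hlt (not_lt.mpr (le_of_lt (permD_lt_same n D hij h)))
    · rintro ⟨m, hm1, hm2, hm3⟩
      exact absurd (h m hm1 hm2) hm3
  · obtain ⟨m, hm1, hm2, hm3⟩ := h
    exact ⟨fun _ => ⟨m, hm1, hm2, hm3⟩, fun _ => permD_lt_diff n D hij hm1 hm2 hm3⟩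


end GBij

namespace GBij
open Finset

variable {n : ℕ}

lemma pv_eq (π : Equiv.Perm (Fin n)) {i : ℕ} (h : i < n) : pv π i = (π ⟨i, h⟩ : ℕ) := dif_pos h

lemma mem_descents (π : Equiv.Perm (Fin n)) {i : ℕ} (h : i < n - 1) :
    i ∈ descents π ↔ (π ⟨i + 1, by omega⟩ : ℕ) < π ⟨i, by omega⟩ := by
  unfold descents
  rw [Finset.mem_filter, Finset.mem_range,
    pv_eq π (show i + 1 < n by omega), pv_eq π (show i < n by omega)]
  exact and_iff_right h

lemma permD_avoids231 (n : ℕ) (D : Finset ℕ) : Avoids231 (permD n D) := by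
  rintro ⟨i, j, k, hij, hjk, h1, h2⟩
  obtain ⟨m, hm1, hm2, hm3⟩ := (permD_avoids_aux n D hij).mp h2
  have hik : i < k := lt_trans hij hjk
  have hjk' : (j : ℕ) ≤ (k : ℕ) := le_of_lt (Fin.lt_def.mp hjk)
  have : permD n D i < permD n D k := permD_lt_diff n D hik hm1 (by omega) hm3
  exact absurd h1 (not_lt.mpr (le_of_lt this))

lemma permD_avoids312 (n : ℕ) (D : Finset ℕ) : Avoids312 (permD n D) := by
  rintro ⟨i, j, k, hij, hjk, h1, h2⟩
  obtain ⟨m, hm1, hm2, hm3⟩ := (permD_avoids_aux n D hjk).mp h1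
  have hik : i < k := lt_trans hij hjk
  have hij' : (i : ℕ) ≤ (j : ℕ) := le_of_lt (Fin.lt_def.mp hij)
  have : permD n D i < permD n D k := permD_lt_diff n D hik (by omega) hm2 hm3
  exact absurd h2 (not_lt.mpr (le_of_lt this))

lemma descents_permD {D : Finset ℕ} (hD : D ⊆ Finset.range (n - 1)) :
    descents (permD n D) = D := by
  ext i
  by_cases h : i < n - 1
  · rw [mem_descents _ h]
    have hlt : (⟨i, by omega⟩ : Fin n) < ⟨i + 1, by omega⟩ := Fin.lt_def.mpr (by simp)
    constructor
    · intro hd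
      by_contra hni
      have := permD_lt_diff n D hlt (m := i) le_rfl (by simp) hni
      have := Fin.lt_def.mp this
      omega
    · intro hiD
      exact Fin.lt_def.mp (permD_lt_same n D hlt
        (fun m hm1 hm2 => by
          simp only [Fin.val_mk] at hm1 hm2
          have hmi : m = i := by omega
          rwa [hmi]))
  · have h1 : i ∉ descents (permD n D) := by
      unfold descents
      rw [Finset.mem_filter]
      rintro ⟨hr, -⟩
      exact h (Finset.mem_range.mp hr)
    have h2 : i ∉ D := fun hm => h (Finset.mem_range.mp (hD hm))
    simp [h1, h2]

lemma isLRMax_permD (D : Finset ℕ) (i : Fin n) :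
    IsLRMax (permD n D) i ↔ ((i : ℕ) = 0 ∨ ((i : ℕ) - 1) ∉ D) := by
  constructor
  · intro hmax
    by_contra hc
    push_neg at hc
    obtain ⟨h0, hmem⟩ := hc
    have hlt : (⟨(i : ℕ) - 1, by have := i.2; omega⟩ : Fin n) < i := Fin.lt_def.mpr (by simp only [Fin.val_mk]; omega)
    have h1 := permD_lt_same n D hlt
      (fun m hm1 hm2 => by
        simp only [Fin.val_mk] at hm1 hm2
        have hmi : m = (i : ℕ) - 1 := by omega
        rwa [hmi])
    have h2 := hmax _ hlt
    exact absurd h2 (not_lt.mpr (le_of_lt h1))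
  · intro h j hj
    have hj' := Fin.lt_def.mp hj
    rcases Nat.eq_zero_or_pos (i : ℕ) with h0 | hpos
    · exact absurd hj' (by omega)
    · rcases h with h0 | hnm
      · exact absurd h0 (by omega)
      · exact permD_lt_diff n D hj (m := (i : ℕ) - 1) (by omega) (by omega) hnm

/-! ### structure theorem: every (231,312)-avoider is a `permD` -/

variable {π : Equiv.Perm (Fin n)}

lemma step_desc (h231 : Avoids231 π) (h312 : Avoids312 π) {i : ℕ} (hi : i + 1 < n)
    (hlt : (π ⟨i + 1, hi⟩ : ℕ) < π ⟨i, by omega⟩) :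
    (π ⟨i + 1, hi⟩ : ℕ) + 1 = π ⟨i, by omega⟩ := by
  by_contra hne
  have hvn : (π ⟨i + 1, hi⟩ : ℕ) + 1 < n := by
    have := (π ⟨i, by omega⟩).2; omega
  set v : Fin n := ⟨(π ⟨i + 1, hi⟩ : ℕ) + 1, hvn⟩ with hv
  set p : Fin n := π.symm v with hp
  have hpv : π p = v := π.apply_symm_apply v
  have hpval : (π p : ℕ) = (π ⟨i + 1, hi⟩ : ℕ) + 1 := by rw [hpv]
  have hvlt : (v : ℕ) < π ⟨i, by omega⟩ := by
    show (π ⟨i + 1, hi⟩ : ℕ) + 1 < π ⟨i, by omega⟩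
    omega
  have hp1 : (p : ℕ) ≠ i + 1 := by
    intro h
    have he : p = ⟨i + 1, hi⟩ := Fin.ext h
    rw [he] at hpval
    omega
  have hp2 : (p : ℕ) ≠ i := by
    intro h
    have he : p = ⟨i, by omega⟩ := Fin.ext h
    rw [he] at hpval
    omega
  rcases Nat.lt_or_ge (p : ℕ) i with hcase | hcase
  · exact h231 ⟨p, ⟨i, by omega⟩, ⟨i + 1, hi⟩, Fin.lt_def.mpr (by simpa using hcase),
      Fin.lt_def.mpr (by simp), Fin.lt_def.mpr (by rw [hpval]; omega),
      Fin.lt_def.mpr (by rw [hpval]; omega)⟩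
  · have hcase2 : i + 1 < (p : ℕ) := by omega
    exact h312 ⟨⟨i, by omega⟩, ⟨i + 1, hi⟩, p, Fin.lt_def.mpr (by simp),
      Fin.lt_def.mpr (by simpa using hcase2), Fin.lt_def.mpr (by rw [hpval]; omega),
      Fin.lt_def.mpr (by rw [hpval]; omega)⟩

lemma chain_d (h231 : Avoids231 π) (h312 : Avoids312 π) :
    ∀ (d : ℕ) {i : ℕ} (hi : i + d < n),
      (∀ m, i ≤ m → m < i + d → m ∈ descents π) →
      (π ⟨i + d, hi⟩ : ℕ) + d = π ⟨i, by omega⟩ := by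
  intro d
  induction d with
  | zero => intro i hi _; simp
  | succ d ih =>
    intro i hi h
    have h1 := ih (i := i + 1) (by omega) (fun m hm1 hm2 => h m (by omega) (by omega))
    have h2 : i ∈ descents π := h i le_rfl (by omega)
    have hlt := (mem_descents π (show i < n - 1 by omega)).mp h2
    have h3 := step_desc h231 h312 (show i + 1 < n by omega) hlt
    have he : (⟨i + (d + 1), hi⟩ : Fin n) = ⟨i + 1 + d, by omega⟩ := Fin.mk_eq_mk.mpr (by omega)
    rw [he]
    omega

lemma chain_desc (h231 : Avoids231 π) (h312 : Avoids312 π) {i j : ℕ} (hij : i ≤ j) (hj : j < n)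
    (h : ∀ m, i ≤ m → m < j → m ∈ descents π) :
    (π ⟨j, hj⟩ : ℕ) + (j - i) = π ⟨i, by omega⟩ := by
  have h1 := chain_d h231 h312 (j - i) (i := i) (by omega) (fun m h1 h2 => h m h1 (by omega))
  have he : (⟨i + (j - i), by omega⟩ : Fin n) = ⟨j, hj⟩ := Fin.mk_eq_mk.mpr (by omega)
  rw [he] at h1
  omega

lemma asc_lrmax (h231 : Avoids231 π) (h312 : Avoids312 π) {i : ℕ} (hi : i + 1 < n)
    (hlt : (π ⟨i, by omega⟩ : ℕ) < π ⟨i + 1, hi⟩) :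
    ∀ k : Fin n, (k : ℕ) ≤ i → (π k : ℕ) < π ⟨i + 1, hi⟩ := by
  intro k hk
  by_contra hge
  have hne : (π ⟨i + 1, hi⟩ : ℕ) ≠ π k := by
    intro h
    have he := π.injective (Fin.ext h : π ⟨i + 1, hi⟩ = π k)
    have := congrArg Fin.val he
    simp at this
    omega
  have hgt : (π ⟨i + 1, hi⟩ : ℕ) < π k := by omega
  have hki : (k : ℕ) < i := by
    rcases eq_or_lt_of_le hk with h | h
    · exfalso
      have : k = ⟨i, by omega⟩ := Fin.ext h
      rw [this] at hgt
      omega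
    · exact h
  rcases Nat.lt_or_ge (π k : ℕ) ((π ⟨i, by omega⟩ : ℕ)) with hc | hc
  · omega
  · have hc' : (π ⟨i, by omega⟩ : ℕ) < π k := by
      have hne2 : (π ⟨i, by omega⟩ : ℕ) ≠ π k := by
        intro h
        have he := π.injective (Fin.ext h : π ⟨i, by omega⟩ = π k)
        have := congrArg Fin.val he
        simp at this
        omega
      omega
    exact h312 ⟨k, ⟨i, by omega⟩, ⟨i + 1, hi⟩, Fin.lt_def.mpr (by simpa using hki),
      Fin.lt_def.mpr (by simp), Fin.lt_def.mpr hlt, Fin.lt_def.mpr hgt⟩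

set_option maxHeartbeats 1000000 in
lemma runstart_sep (h231 : Avoids231 π) (h312 : Avoids312 π) {a : ℕ} (han : 0 < a)
    (han2 : a < n) (ha : (a - 1) ∉ descents π) :
    ∀ k : Fin n, (k : ℕ) < a → ∀ j : Fin n, a ≤ (j : ℕ) → (π k : ℕ) < π j := by
  intro k hk j hj
  set D := descents π with hDdef
  set a'' := rA D (j : ℕ) with ha''
  have haj : a'' ≤ (j : ℕ) := rA_le D _
  have hmem : ∀ m, a'' ≤ m → m < (j : ℕ) → m ∈ D := fun m h1 h2 => rA_mem D _ m h2 h1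
  have haa : a ≤ a'' := by
    by_contra hlt
    push_neg at hlt
    exact ha (hmem (a - 1) (by omega) (by omega))
  have hpos : 0 < a'' := by omega
  have hstart := rA_min D (j : ℕ) hpos
  have ha1n : a'' - 1 < n - 1 := by have := j.2; omega
  have hanb : a'' < n := by have := j.2; omega
  have hasc : (π ⟨a'' - 1, by omega⟩ : ℕ) < π ⟨a'' - 1 + 1, by omega⟩ := by
    have hne : (π ⟨a'' - 1 + 1, by omega⟩ : ℕ) ≠ (π ⟨a'' - 1, by omega⟩ : ℕ) := by
      intro h
      have he := π.injective (Fin.ext h : π ⟨a'' - 1 + 1, by omega⟩ = π ⟨a'' - 1, by omega⟩)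
      have := congrArg Fin.val he
      simp at this
    have hnd : ¬ ((π ⟨a'' - 1 + 1, by omega⟩ : ℕ) < π ⟨a'' - 1, by omega⟩) :=
      fun hc => hstart ((mem_descents π ha1n).mpr hc)
    omega
  have hL2 := asc_lrmax h231 h312 (show a'' - 1 + 1 < n by omega) hasc
  have hk2 : (π k : ℕ) < π ⟨a'' - 1 + 1, by omega⟩ := hL2 k (by omega)
  have he2 : (⟨a'' - 1 + 1, by omega⟩ : Fin n) = ⟨a'', hanb⟩ := Fin.mk_eq_mk.mpr (by omega)
  rw [he2] at hk2
  have hchainj : (π ⟨(j : ℕ), j.2⟩ : ℕ) + ((j : ℕ) - a'') = π ⟨a'', hanb⟩ := by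
    have := chain_desc h231 h312 haj j.2 hmem
    have hjj : (⟨(j : ℕ), j.2⟩ : Fin n) = j := Fin.ext rfl
    omega
  have hjj : (⟨(j : ℕ), j.2⟩ : Fin n) = j := Fin.ext rfl
  rw [hjj] at hchainj
  by_contra hge
  push_neg at hge
  set t : ℕ := (π ⟨a'', hanb⟩ : ℕ) - π k with ht
  have htpos : 0 < t := by omega
  have htle : t ≤ (j : ℕ) - a'' := by omega
  have hmn : a'' + t < n := by have := j.2; omega
  have hchainm : (π ⟨a'' + t, hmn⟩ : ℕ) + t = π ⟨a'', hanb⟩ := by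
    have := chain_d h231 h312 t (i := a'') hmn (fun m h1 h2 => hmem m h1 (by omega))
    omega
  have hveq : (π ⟨a'' + t, hmn⟩ : ℕ) = (π k : ℕ) := by omega
  have heq : π ⟨a'' + t, hmn⟩ = π k := Fin.ext hveq
  have := congrArg Fin.val (π.injective heq)
  simp at this
  omega

lemma structure_thm (h231 : Avoids231 π) (h312 : Avoids312 π) (i : Fin n) :
    (π i : ℕ) = rA (descents π) i + rB n (descents π) i - i := by
  set D := descents π with hDdef
  set a := rA D (i : ℕ) with hadef
  set b := rB n D (i : ℕ) with hbdef
  have hin : (i : ℕ) ≤ n - 1 := by have := i.2; omega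
  have hA : a ≤ (i : ℕ) := rA_le D _
  have hB : (i : ℕ) ≤ b := rB_ge D hin
  have hbn : b < n := by have := rB_le n D (i : ℕ); have := i.2; omega
  have han : a < n := by omega
  have hrun : ∀ m, a ≤ m → m < b → m ∈ D := run_mem n D (i : ℕ)
  have hchain : ∀ j, a ≤ j → j ≤ b → ∀ (hjn : j < n),
      (π ⟨j, hjn⟩ : ℕ) + (j - a) = π ⟨a, han⟩ :=
    fun j h1 h2 hjn => chain_desc h231 h312 h1 hjn (fun m hm1 hm2 => hrun m hm1 (by omega))
  have hsep1 : ∀ k : Fin n, (k : ℕ) < a → ∀ j : Fin n, a ≤ (j : ℕ) → (π k : ℕ) < π j := by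
    intro k hk j hj
    have hpos : 0 < a := by omega
    exact runstart_sep h231 h312 hpos han (rA_min D (i : ℕ) hpos) k hk j hj
  have hsep2 : ∀ j : Fin n, (j : ℕ) ≤ b → ∀ k : Fin n, b < (k : ℕ) → (π j : ℕ) < π k := by
    intro j hj k hk
    have hb1 : b < n - 1 := by have := k.2; omega
    have hbnd := rB_max n D (i : ℕ) hb1
    exact runstart_sep h231 h312 (show 0 < b + 1 by omega) (show b + 1 < n by omega)
      (by simpa using hbnd) j (by omega) k (by omega)
  have hcount1 : b + 1 ≤ (π ⟨a, han⟩ : ℕ) + 1 := by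
    have hle := Finset.card_le_card_of_injOn (s := Finset.range (b + 1))
      (t := Finset.range ((π ⟨a, han⟩ : ℕ) + 1)) (pv π)
      (by
        intro m hm
        rw [Finset.mem_coe, Finset.mem_range] at hm ⊢
        have hmn : m < n := by omega
        rw [pv_eq π hmn]
        rcases Nat.lt_or_ge m a with hc | hc
        · have := hsep1 ⟨m, hmn⟩ hc ⟨a, han⟩ le_rfl
          omega
        · have := hchain m hc (by omega) hmn
          omega)
      (by
        intro x hx y hy hxy
        simp only [Finset.coe_range, Set.mem_Iio] at hx hy
        have hxn : x < n := by omega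
        have hyn : y < n := by omega
        rw [pv_eq π hxn, pv_eq π hyn] at hxy
        have := congrArg Fin.val (π.injective (Fin.ext hxy))
        simpa using this)
    simpa using hle
  have hcount2 : n - a ≤ n - (π ⟨b, hbn⟩ : ℕ) := by
    have hle := Finset.card_le_card_of_injOn (s := Finset.Ico a n)
      (t := Finset.Ico ((π ⟨b, hbn⟩ : ℕ)) n) (pv π)
      (by
        intro m hm
        rw [Finset.mem_coe, Finset.mem_Ico] at hm ⊢
        obtain ⟨hm1, hm2⟩ := hm
        rw [pv_eq π hm2]
        refine ⟨?_, (π ⟨m, hm2⟩).2⟩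
        rcases le_or_gt m b with hc | hc
        · have h1 := hchain m hm1 hc hm2
          have h2 := hchain b (by omega) le_rfl hbn
          omega
        · have := hsep2 ⟨b, hbn⟩ le_rfl ⟨m, hm2⟩ hc
          omega)
      (by
        intro x hx y hy hxy
        simp only [Finset.coe_Ico, Set.mem_Ico] at hx hy
        rw [pv_eq π hx.2, pv_eq π hy.2] at hxy
        have := congrArg Fin.val (π.injective (Fin.ext hxy))
        simpa using this)
    simpa [Nat.card_Ico] using hle
  have h1 := hchain b (by omega) le_rfl hbn
  have h2 := hchain (i : ℕ) hA hB i.2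
  have hi : (⟨(i : ℕ), i.2⟩ : Fin n) = i := Fin.ext rfl
  rw [hi] at h2
  have hπb : (π ⟨b, hbn⟩ : ℕ) < n := (π ⟨b, hbn⟩).2
  omega

lemma eq_permD (h231 : Avoids231 π) (h312 : Avoids312 π) : π = permD n (descents π) := by
  apply Equiv.ext
  intro i
  apply Fin.ext
  rw [permD_apply]
  exact structure_thm h231 h312 i

end GBij

namespace GBij
open Finset

variable {n : ℕ}

/-! ### counting function and the permutation built from a "max-position" set -/

def cnt (M : Finset ℕ) (i : ℕ) : ℕ := (M.filter (· < i)).card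

lemma cnt_le (M : Finset ℕ) (i : ℕ) : cnt M i ≤ i := by
  have h : M.filter (· < i) ⊆ Finset.range i := by
    intro x hx
    exact Finset.mem_range.mpr (Finset.mem_filter.mp hx).2
  calc cnt M i ≤ (Finset.range i).card := Finset.card_le_card h
    _ = i := Finset.card_range i

lemma cnt_mono (M : Finset ℕ) {i j : ℕ} (h : i ≤ j) : cnt M i ≤ cnt M j := by
  apply Finset.card_le_card
  intro x hx
  obtain ⟨h1, h2⟩ := Finset.mem_filter.mp hx
  exact Finset.mem_filter.mpr ⟨h1, by omega⟩

lemma cnt_lt (M : Finset ℕ) {i j : ℕ} (hij : i < j) (hi : i ∈ M) : cnt M i < cnt M j := by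
  apply Finset.card_lt_card
  constructor
  · intro x hx
    obtain ⟨h1, h2⟩ := Finset.mem_filter.mp hx
    exact Finset.mem_filter.mpr ⟨h1, by omega⟩
  · intro hsub
    have hm : i ∈ M.filter (· < j) := Finset.mem_filter.mpr ⟨hi, hij⟩
    have := (Finset.mem_filter.mp (hsub hm)).2
    omega

lemma cnt_le_add (M : Finset ℕ) {i j : ℕ} (hij : i ≤ j) : cnt M j ≤ cnt M i + (j - i) := by
  have hsub : M.filter (· < j) ⊆ M.filter (· < i) ∪ Finset.Ico i j := by
    intro x hx
    obtain ⟨h1, h2⟩ := Finset.mem_filter.mp hx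
    rcases Nat.lt_or_ge x i with h | h
    · exact Finset.mem_union_left _ (Finset.mem_filter.mpr ⟨h1, h⟩)
    · exact Finset.mem_union_right _ (Finset.mem_Ico.mpr ⟨h, h2⟩)
  calc cnt M j ≤ (M.filter (· < i) ∪ Finset.Ico i j).card := Finset.card_le_card hsub
    _ ≤ cnt M i + (Finset.Ico i j).card := Finset.card_union_le _ _
    _ = cnt M i + (j - i) := by rw [Nat.card_Ico]

lemma cnt_le_add' (M : Finset ℕ) {i j : ℕ} (hij : i < j) (hi : i ∉ M) :
    cnt M j + 1 ≤ cnt M i + (j - i) := by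
  have hsub : M.filter (· < j) ⊆ M.filter (· < i) ∪ Finset.Ico (i + 1) j := by
    intro x hx
    obtain ⟨h1, h2⟩ := Finset.mem_filter.mp hx
    rcases Nat.lt_or_ge x i with h | h
    · exact Finset.mem_union_left _ (Finset.mem_filter.mpr ⟨h1, h⟩)
    · have : x ≠ i := fun he => hi (he ▸ h1)
      exact Finset.mem_union_right _ (Finset.mem_Ico.mpr ⟨by omega, h2⟩)
  have h1 : cnt M j ≤ cnt M i + (Finset.Ico (i + 1) j).card :=
    le_trans (Finset.card_le_card hsub) (Finset.card_union_le _ _)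
  rw [Nat.card_Ico] at h1
  omega

def sg (n : ℕ) (M : Finset ℕ) : Fin n → Fin n := fun i =>
  if (i : ℕ) ∈ M ∨ (i : ℕ) = n - 1 then ⟨n - 1 - cnt M i, by have := i.2; omega⟩
  else ⟨(i : ℕ) - cnt M i, by have := i.2; omega⟩

lemma sg_val_pos (M : Finset ℕ) (i : Fin n) (h : (i : ℕ) ∈ M ∨ (i : ℕ) = n - 1) :
    (sg n M i : ℕ) = n - 1 - cnt M i := by
  unfold sg
  rw [if_pos h]

lemma sg_val_neg (M : Finset ℕ) (i : Fin n) (h : ¬ ((i : ℕ) ∈ M ∨ (i : ℕ) = n - 1)) :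
    (sg n M i : ℕ) = (i : ℕ) - cnt M i := by
  unfold sg
  rw [if_neg h]

lemma sg_lt_of_mem (M : Finset ℕ) {i j : Fin n} (hij : i < j) (hi : (i : ℕ) ∈ M) :
    (sg n M j : ℕ) < sg n M i := by
  have hij' : (i : ℕ) < (j : ℕ) := hij
  have h1 : cnt M (i : ℕ) < cnt M (j : ℕ) := cnt_lt M hij' hi
  have h2 : cnt M (j : ℕ) ≤ cnt M (i : ℕ) + ((j : ℕ) - (i : ℕ)) := cnt_le_add M (le_of_lt hij')
  have h3 : cnt M (i : ℕ) ≤ (i : ℕ) := cnt_le M (i : ℕ)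
  have hjn : (j : ℕ) ≤ n - 1 := by have := j.2; omega
  rw [sg_val_pos M i (Or.inl hi)]
  by_cases hc : (j : ℕ) ∈ M ∨ (j : ℕ) = n - 1
  · rw [sg_val_pos M j hc]; omega
  · rw [sg_val_neg M j hc]; omega

lemma sg_lt_of_not_mem (M : Finset ℕ) {i j : Fin n} (hij : i < j) (hi : (i : ℕ) ∉ M) :
    (sg n M i : ℕ) < sg n M j := by
  have hij' : (i : ℕ) < (j : ℕ) := hij
  have hjn : (j : ℕ) ≤ n - 1 := by have := j.2; omega
  have hin : (i : ℕ) ≠ n - 1 := by omega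
  have h2 : cnt M (j : ℕ) + 1 ≤ cnt M (i : ℕ) + ((j : ℕ) - (i : ℕ)) := cnt_le_add' M hij' hi
  have h3 : cnt M (i : ℕ) ≤ (i : ℕ) := cnt_le M (i : ℕ)
  have h4 : cnt M (i : ℕ) ≤ cnt M (j : ℕ) := cnt_mono M (le_of_lt hij')
  rw [sg_val_neg M i (by tauto)]
  by_cases hc : (j : ℕ) ∈ M ∨ (j : ℕ) = n - 1
  · rw [sg_val_pos M j hc]; omega
  · rw [sg_val_neg M j hc]; omega

lemma sg_injective (M : Finset ℕ) : Function.Injective (sg n M) := by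
  intro i j h
  by_contra hne
  have hval : (sg n M i : ℕ) = (sg n M j : ℕ) := by rw [h]
  rcases lt_trichotomy i j with hc | hc | hc
  · by_cases hm : (i : ℕ) ∈ M
    · have := sg_lt_of_mem M hc hm; omega
    · have := sg_lt_of_not_mem M hc hm; omega
  · exact hne hc
  · by_cases hm : (j : ℕ) ∈ M
    · have := sg_lt_of_mem M hc hm; omega
    · have := sg_lt_of_not_mem M hc hm; omega

noncomputable def permM (n : ℕ) (M : Finset ℕ) : Equiv.Perm (Fin n) :=
  Equiv.ofBijective (sg n M) (Finite.injective_iff_bijective.mp (sg_injective M))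

lemma permM_val (M : Finset ℕ) (i : Fin n) : (permM n M i : ℕ) = (sg n M i : ℕ) := rfl

lemma descents_permM {M : Finset ℕ} (hM : M ⊆ Finset.range (n - 1)) :
    descents (permM n M) = M := by
  ext i
  by_cases h : i < n - 1
  · rw [mem_descents _ h]
    rw [permM_val, permM_val]
    constructor
    · intro hd
      by_contra hni
      have := sg_lt_of_not_mem (n := n) M (i := ⟨i, by omega⟩) (j := ⟨i + 1, by omega⟩)
        (Fin.mk_lt_mk.mpr (by omega)) (by simpa using hni)
      omega
    · intro hm
      exact sg_lt_of_mem (n := n) M (i := ⟨i, by omega⟩) (j := ⟨i + 1, by omega⟩)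
        (Fin.mk_lt_mk.mpr (by omega)) (by simpa using hm)
  · have h1 : i ∉ descents (permM n M) := by
      unfold descents
      rw [Finset.mem_filter]
      rintro ⟨hr, -⟩
      exact h (Finset.mem_range.mp hr)
    have h2 : i ∉ M := fun hm => h (Finset.mem_range.mp (hM hm))
    simp [h1, h2]

lemma isRLMax_permM (M : Finset ℕ) (i : Fin n) :
    IsRLMax (permM n M) i ↔ ((i : ℕ) ∈ M ∨ (i : ℕ) = n - 1) := by
  constructor
  · intro hmax
    by_contra hc
    push_neg at hc
    obtain ⟨h1, h2⟩ := hc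
    have hin : (i : ℕ) + 1 < n := by have := i.2; omega
    have hlt : i < ⟨(i : ℕ) + 1, hin⟩ := Fin.lt_def.mpr (by simp)
    have hval := sg_lt_of_not_mem M hlt h1
    have h3 := Fin.lt_def.mp (hmax _ hlt)
    rw [permM_val, permM_val] at h3
    omega
  · intro h j hj
    rcases h with hm | he
    · exact Fin.lt_def.mpr (by rw [permM_val, permM_val]; exact sg_lt_of_mem M hj hm)
    · exfalso
      have := Fin.lt_def.mp hj
      have := j.2
      omega

lemma permM_avoids213 (n : ℕ) (M : Finset ℕ) : Avoids213 (permM n M) := by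
  rintro ⟨i, j, k, hij, hjk, h1, h2⟩
  by_cases hm : (i : ℕ) ∈ M
  · have hv := sg_lt_of_mem M (lt_trans hij hjk) hm
    have h2' := Fin.lt_def.mp h2
    rw [permM_val, permM_val] at h2'
    omega
  · have hv := sg_lt_of_not_mem M hij hm
    have h1' := Fin.lt_def.mp h1
    rw [permM_val, permM_val] at h1'
    omega

lemma permM_avoids231 (n : ℕ) (M : Finset ℕ) : Avoids231 (permM n M) := by
  rintro ⟨i, j, k, hij, hjk, h1, h2⟩
  by_cases hm : (i : ℕ) ∈ M
  · have hv := sg_lt_of_mem M hij hm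
    have h2' := Fin.lt_def.mp h2
    rw [permM_val, permM_val] at h2'
    omega
  · have hv := sg_lt_of_not_mem M (lt_trans hij hjk) hm
    have h1' := Fin.lt_def.mp h1
    rw [permM_val, permM_val] at h1'
    omega

/-! ### structure theorem for (213,231)-avoiders -/

variable {σ : Equiv.Perm (Fin n)}

lemma suffix_cases (h213 : Avoids213 σ) (h231 : Avoids231 σ) {i j k : Fin n}
    (hij : i < j) (hik : i < k) (hj : σ j < σ i) (hk : σ i < σ k) : False := by
  rcases lt_trichotomy j k with hc | hc | hc
  · exact h213 ⟨i, j, k, hij, hc, hj, hk⟩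
  · rw [hc] at hj
    exact absurd hk (not_lt.mpr (le_of_lt hj))
  · exact h231 ⟨i, k, j, hik, hc, hj, hk⟩

lemma desc_max (h213 : Avoids213 σ) (h231 : Avoids231 σ) {j k : Fin n} (hjk : j < k)
    (hd : (j : ℕ) ∈ descents σ) : σ k < σ j := by
  have hj1 : (j : ℕ) < n - 1 := Finset.mem_range.mp (Finset.mem_filter.mp hd).1
  have hstep := (mem_descents σ hj1).mp hd
  have hjeta : (⟨(j : ℕ), by omega⟩ : Fin n) = j := Fin.eta j _
  rw [hjeta] at hstep
  have hne : σ k ≠ σ j := fun h => (ne_of_lt hjk) (σ.injective h).symm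
  rcases lt_or_gt_of_ne hne with h | h
  · exact h
  · exfalso
    exact suffix_cases h213 h231 (Fin.lt_def.mpr (by simp)) hjk
      (Fin.lt_def.mpr hstep) h

lemma nondesc_min (h213 : Avoids213 σ) (h231 : Avoids231 σ) {j k : Fin n} (hjk : j < k)
    (hd : (j : ℕ) ∉ descents σ) : σ j < σ k := by
  have hj1 : (j : ℕ) < n - 1 := by
    have hk2 := k.2
    have := Fin.lt_def.mp hjk
    omega
  have hnd : ¬ ((σ ⟨(j : ℕ) + 1, by omega⟩ : ℕ) < σ ⟨(j : ℕ), by omega⟩) :=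
    fun hc => hd ((mem_descents σ hj1).mpr hc)
  have hjeta : (⟨(j : ℕ), by omega⟩ : Fin n) = j := Fin.eta j _
  rw [hjeta] at hnd
  have hne1 : (σ ⟨(j : ℕ) + 1, by omega⟩ : ℕ) ≠ (σ j : ℕ) := by
    intro h
    have he := σ.injective (Fin.ext h)
    have := congrArg Fin.val he
    simp at this
  have hstep : (σ j : ℕ) < σ ⟨(j : ℕ) + 1, by omega⟩ := by omega
  have hne : σ j ≠ σ k := fun h => (ne_of_lt hjk) (σ.injective h)
  rcases lt_or_gt_of_ne hne with h | h
  · exact h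
  · exfalso
    exact suffix_cases h213 h231 hjk (Fin.lt_def.mpr (by simp))
      h (Fin.lt_def.mpr hstep)

end GBij

namespace GBij
open Finset

variable {n : ℕ} {σ : Equiv.Perm (Fin n)}

lemma perm_val_count (σ : Equiv.Perm (Fin n)) (i : Fin n) :
    (σ i : ℕ) = (Finset.univ.filter fun j : Fin n => σ j < σ i).card := by
  have himg : (Finset.univ.filter fun j : Fin n => σ j < σ i)
      = (Finset.Iio (σ i)).image σ.symm := by
    ext j
    simp only [Finset.mem_filter, Finset.mem_univ, true_and, Finset.mem_image, Finset.mem_Iio]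
    constructor
    · intro h
      exact ⟨σ j, h, σ.symm_apply_apply j⟩
    · rintro ⟨v, hv, rfl⟩
      simpa using hv
  rw [himg, Finset.card_image_of_injective _ σ.symm.injective, Fin.card_Iio]

lemma count_split (σ : Equiv.Perm (Fin n)) (i : Fin n) :
    (Finset.univ.filter fun j : Fin n => σ j < σ i).card
      = (Finset.univ.filter fun j : Fin n => j < i ∧ σ j < σ i).card
        + (Finset.univ.filter fun j : Fin n => i < j ∧ σ j < σ i).card := by
  rw [← Finset.card_union_of_disjoint]
  · congr 1
    ext j
    simp only [Finset.mem_filter, Finset.mem_univ, true_and, Finset.mem_union]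
    constructor
    · intro h
      rcases lt_trichotomy j i with hc | hc | hc
      · exact Or.inl ⟨hc, h⟩
      · exfalso; rw [hc] at h; exact lt_irrefl _ h
      · exact Or.inr ⟨hc, h⟩
    · rintro (⟨-, h⟩ | ⟨-, h⟩) <;> exact h
  · rw [Finset.disjoint_left]
    rintro j hj hj'
    obtain ⟨-, h1⟩ := Finset.mem_filter.mp hj
    obtain ⟨-, h2⟩ := Finset.mem_filter.mp hj'
    exact absurd h2.1 (not_lt.mpr (le_of_lt h1.1))

lemma count_before (h213 : Avoids213 σ) (h231 : Avoids231 σ) (i : Fin n) :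
    (Finset.univ.filter fun j : Fin n => j < i ∧ σ j < σ i).card
      = (i : ℕ) - cnt (descents σ) (i : ℕ) := by
  have hcard : (Finset.univ.filter fun j : Fin n => j < i ∧ σ j < σ i).card
      = ((Finset.range (i : ℕ)).filter fun m => m ∉ descents σ).card := by
    apply Finset.card_nbij (fun j : Fin n => (j : ℕ))
    · intro j hj
      obtain ⟨-, hj1, hj2⟩ := Finset.mem_filter.mp hj
      rw [Finset.mem_coe, Finset.mem_filter, Finset.mem_range]
      refine ⟨hj1, fun hd => ?_⟩
      have := desc_max h213 h231 hj1 hd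
      exact absurd hj2 (not_lt.mpr (le_of_lt this))
    · intro x _ y _ hxy
      exact Fin.ext hxy
    · intro m hm
      simp only [Finset.coe_filter, Finset.mem_range, Set.mem_setOf_eq] at hm
      obtain ⟨hm1, hm2⟩ := hm
      have hmn : m < n := by have := i.2; omega
      refine ⟨⟨m, hmn⟩, ?_, rfl⟩
      simp only [Finset.coe_filter, Finset.mem_univ, true_and, Set.mem_setOf_eq]
      have hlt : (⟨m, hmn⟩ : Fin n) < i := Fin.lt_def.mpr (by simpa using hm1)
      exact ⟨hlt, nondesc_min h213 h231 hlt hm2⟩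
  rw [hcard]
  have h1 := Finset.card_filter_add_card_filter_not
    (s := Finset.range (i : ℕ)) (p := fun m => m ∈ descents σ)
  have h2 : ((Finset.range (i : ℕ)).filter fun m => m ∈ descents σ).card
      = cnt (descents σ) (i : ℕ) := by
    unfold cnt
    congr 1
    ext m
    simp only [Finset.mem_filter, Finset.mem_range]
    exact ⟨fun ⟨a, b⟩ => ⟨b, a⟩, fun ⟨a, b⟩ => ⟨b, a⟩⟩
  rw [Finset.card_range] at h1
  omega

lemma count_after_max (h213 : Avoids213 σ) (h231 : Avoids231 σ) (i : Fin n)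
    (h : (i : ℕ) ∈ descents σ ∨ (i : ℕ) = n - 1) :
    (Finset.univ.filter fun j : Fin n => i < j ∧ σ j < σ i).card = n - 1 - (i : ℕ) := by
  have heq : (Finset.univ.filter fun j : Fin n => i < j ∧ σ j < σ i)
      = (Finset.univ.filter fun j : Fin n => i < j) := by
    ext j
    simp only [Finset.mem_filter, Finset.mem_univ, true_and, and_iff_left_iff_imp]
    intro hj
    rcases h with hd | he
    · exact desc_max h213 h231 hj hd
    · exfalso
      have := Fin.lt_def.mp hj
      have := j.2
      omega
  rw [heq]
  have hcard : (Finset.univ.filter fun j : Fin n => i < j).card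
      = (Finset.Ico ((i : ℕ) + 1) n).card := by
    apply Finset.card_nbij (fun j : Fin n => (j : ℕ))
    · intro j hj
      obtain ⟨-, hj1⟩ := Finset.mem_filter.mp hj
      rw [Finset.mem_coe, Finset.mem_Ico]
      exact ⟨Fin.lt_def.mp hj1, j.2⟩
    · intro x _ y _ hxy
      exact Fin.ext hxy
    · intro m hm
      simp only [Finset.coe_Ico, Set.mem_Ico] at hm
      refine ⟨⟨m, hm.2⟩, ?_, rfl⟩
      simp only [Finset.coe_filter, Finset.mem_univ, true_and, Set.mem_setOf_eq]
      exact Fin.lt_def.mpr (by simp; omega)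
  rw [hcard, Nat.card_Ico]
  omega

lemma count_after_min (h213 : Avoids213 σ) (h231 : Avoids231 σ) (i : Fin n)
    (hd : (i : ℕ) ∉ descents σ) :
    (Finset.univ.filter fun j : Fin n => i < j ∧ σ j < σ i).card = 0 := by
  rw [Finset.card_eq_zero, Finset.filter_eq_empty_iff]
  rintro j - ⟨h1, h2⟩
  have := nondesc_min h213 h231 h1 hd
  exact absurd h2 (not_lt.mpr (le_of_lt this))

lemma structure_sigma (h213 : Avoids213 σ) (h231 : Avoids231 σ) (i : Fin n) :
    (σ i : ℕ) = (sg n (descents σ) i : ℕ) := by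
  have hc := perm_val_count σ i
  rw [count_split] at hc
  have hbefore := count_before h213 h231 i
  have hcle := cnt_le (descents σ) (i : ℕ)
  have hi2 := i.2
  by_cases h : (i : ℕ) ∈ descents σ ∨ (i : ℕ) = n - 1
  · rw [sg_val_pos _ i h]
    have hafter := count_after_max h213 h231 i h
    omega
  · push_neg at h
    rw [sg_val_neg _ i (not_or.mpr ⟨h.1, h.2⟩)]
    have hafter := count_after_min h213 h231 i h.1
    omega

lemma eq_permM (h213 : Avoids213 σ) (h231 : Avoids231 σ) : σ = permM n (descents σ) := by
  apply Equiv.ext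
  intro i
  apply Fin.ext
  rw [permM_val]
  exact structure_sigma h213 h231 i

end GBij

namespace GBij
open Finset

variable {n : ℕ}

lemma ascents_eq (π : Equiv.Perm (Fin n)) :
    ascents π = Finset.range (n - 1) \ descents π := by
  ext i
  simp only [ascents, descents, Finset.mem_filter, Finset.mem_sdiff, Finset.mem_range]
  constructor
  · rintro ⟨h1, h2⟩
    exact ⟨h1, fun hc => absurd hc.2 (not_lt.mpr (le_of_lt h2))⟩
  · rintro ⟨h1, h2⟩
    refine ⟨h1, ?_⟩
    have hne : pv π i ≠ pv π (i + 1) := by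
      have e1 := pv_eq π (show i < n by omega)
      have e2 := pv_eq π (show i + 1 < n by omega)
      intro h
      have h' : (π ⟨i, by omega⟩ : ℕ) = (π ⟨i + 1, by omega⟩ : ℕ) := by omega
      have := congrArg Fin.val (π.injective (Fin.ext h'))
      simp at this
    have hnd : ¬ (pv π (i + 1) < pv π i) := fun hc => h2 ⟨h1, hc⟩
    omega

/-! ### reflection -/

def rr (n x : ℕ) : ℕ := n - 2 - x

lemma mem_image_rr {A : Finset ℕ} (hA : A ⊆ Finset.range (n - 1)) {x : ℕ} :
    x ∈ A.image (rr n) ↔ x < n - 1 ∧ rr n x ∈ A := by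
  simp only [Finset.mem_image]
  constructor
  · rintro ⟨a, ha, rfl⟩
    have h1 := Finset.mem_range.mp (hA ha)
    refine ⟨by unfold rr; omega, ?_⟩
    have h2 : rr n (rr n a) = a := by unfold rr; omega
    rwa [h2]
  · rintro ⟨h1, h2⟩
    exact ⟨rr n x, h2, by unfold rr; omega⟩

lemma image_rr_subset {A : Finset ℕ} (hA : A ⊆ Finset.range (n - 1)) :
    A.image (rr n) ⊆ Finset.range (n - 1) := by
  intro x hx
  exact Finset.mem_range.mpr ((mem_image_rr hA).mp hx).1

lemma image_rr_image_rr {A : Finset ℕ} (hA : A ⊆ Finset.range (n - 1)) :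
    (A.image (rr n)).image (rr n) = A := by
  ext x
  rw [mem_image_rr (image_rr_subset hA), mem_image_rr hA]
  constructor
  · rintro ⟨h1, -, h2⟩
    have h3 : rr n (rr n x) = x := by unfold rr; omega
    rwa [h3] at h2
  · intro hx
    have h1 : x < n - 1 := Finset.mem_range.mp (hA hx)
    have h3 : rr n (rr n x) = x := by unfold rr; omega
    exact ⟨h1, by unfold rr; omega, by rwa [h3]⟩

lemma card_image_rr {A : Finset ℕ} (hA : A ⊆ Finset.range (n - 1)) :
    (A.image (rr n)).card = A.card := by
  apply Finset.card_image_of_injOn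
  intro x hx y hy hxy
  have h1 := Finset.mem_range.mp (hA hx)
  have h2 := Finset.mem_range.mp (hA hy)
  unfold rr at hxy
  omega

lemma sdiff_image_rr {D : Finset ℕ} (hD : D ⊆ Finset.range (n - 1)) :
    Finset.range (n - 1) \ ((Finset.range (n - 1) \ D).image (rr n)) = D.image (rr n) := by
  ext x
  rw [Finset.mem_sdiff, Finset.mem_range, mem_image_rr Finset.sdiff_subset, mem_image_rr hD]
  constructor
  · rintro ⟨h1, h2⟩
    refine ⟨h1, ?_⟩
    by_contra hc
    exact h2 ⟨h1, Finset.mem_sdiff.mpr ⟨Finset.mem_range.mpr (by unfold rr; omega), hc⟩⟩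
  · rintro ⟨h1, h2⟩
    refine ⟨h1, ?_⟩
    rintro ⟨-, hmem⟩
    exact (Finset.mem_sdiff.mp hmem).2 h2

lemma nonoverlap_subset {A : Finset ℕ} (hA : A ⊆ Finset.range (n - 1)) :
    {k : ℕ | ∃ S ⊆ A, S.card = k ∧ ∀ i ∈ S, ∀ j ∈ S, i < j → i + 1 < j} ⊆
      {k : ℕ | ∃ S ⊆ A.image (rr n), S.card = k ∧ ∀ i ∈ S, ∀ j ∈ S, i < j → i + 1 < j} := by
  rintro k ⟨S, hS, hcard, hsp⟩
  refine ⟨S.image (rr n), Finset.image_subset_image hS, ?_, ?_⟩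
  · rw [card_image_rr (Finset.Subset.trans hS hA)]
    exact hcard
  · intro i hi j hj hij
    obtain ⟨x, hx, rfl⟩ := Finset.mem_image.mp hi
    obtain ⟨y, hy, rfl⟩ := Finset.mem_image.mp hj
    have hxr := Finset.mem_range.mp (hA (hS hx))
    have hyr := Finset.mem_range.mp (hA (hS hy))
    unfold rr at hij ⊢
    have hyx : y < x := by omega
    have := hsp y hy x hx hyx
    omega

lemma nonoverlap_eq {A : Finset ℕ} (hA : A ⊆ Finset.range (n - 1)) :
    {k : ℕ | ∃ S ⊆ A, S.card = k ∧ ∀ i ∈ S, ∀ j ∈ S, i < j → i + 1 < j} =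
      {k : ℕ | ∃ S ⊆ A.image (rr n), S.card = k ∧ ∀ i ∈ S, ∀ j ∈ S, i < j → i + 1 < j} := by
  apply Set.Subset.antisymm (nonoverlap_subset hA)
  have h := nonoverlap_subset (image_rr_subset hA)
  rwa [image_rr_image_rr hA] at h

/-! ### the equivalences -/

def e1 (n : ℕ) : {π : Equiv.Perm (Fin n) // Avoids231 π ∧ Avoids312 π} ≃
    {D : Finset ℕ // D ⊆ Finset.range (n - 1)} where
  toFun π := ⟨descents π.1, Finset.filter_subset _ _⟩
  invFun D := ⟨permD n D.1, permD_avoids231 n D.1, permD_avoids312 n D.1⟩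
  left_inv π := Subtype.ext (eq_permD π.2.1 π.2.2).symm
  right_inv D := Subtype.ext (descents_permD D.2)

noncomputable def e2 (n : ℕ) : {σ : Equiv.Perm (Fin n) // Avoids213 σ ∧ Avoids231 σ} ≃
    {D : Finset ℕ // D ⊆ Finset.range (n - 1)} where
  toFun σ := ⟨descents σ.1, Finset.filter_subset _ _⟩
  invFun M := ⟨permM n M.1, permM_avoids213 n M.1, permM_avoids231 n M.1⟩
  left_inv σ := Subtype.ext (eq_permM σ.2.1 σ.2.2).symm
  right_inv M := Subtype.ext (descents_permM M.2)

def rmid (n : ℕ) : {D : Finset ℕ // D ⊆ Finset.range (n - 1)} ≃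
    {D : Finset ℕ // D ⊆ Finset.range (n - 1)} where
  toFun D := ⟨(Finset.range (n - 1) \ D.1).image (rr n), image_rr_subset Finset.sdiff_subset⟩
  invFun D := ⟨(Finset.range (n - 1) \ D.1).image (rr n), image_rr_subset Finset.sdiff_subset⟩
  left_inv D := Subtype.ext (by
    show ((Finset.range (n - 1) \ ((Finset.range (n - 1) \ D.1).image (rr n))).image (rr n)) = D.1
    rw [sdiff_image_rr D.2, image_rr_image_rr D.2])
  right_inv D := Subtype.ext (by
    show ((Finset.range (n - 1) \ ((Finset.range (n - 1) \ D.1).image (rr n))).image (rr n)) = D.1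
    rw [sdiff_image_rr D.2, image_rr_image_rr D.2])

noncomputable def gEquiv (n : ℕ) : {π : Equiv.Perm (Fin n) // Avoids231 π ∧ Avoids312 π} ≃
    {σ : Equiv.Perm (Fin n) // Avoids213 σ ∧ Avoids231 σ} :=
  (e1 n).trans ((rmid n).trans (e2 n).symm)

end GBij


theorem map_g_bijection (n : ℕ) :
    ∃ e : {π : Equiv.Perm (Fin n) // Avoids231 π ∧ Avoids312 π} ≃
          {σ : Equiv.Perm (Fin n) // Avoids213 σ ∧ Avoids231 σ},
      ∀ π, (∀ i : Fin n, IsLRMax π.1 i ↔ IsRLMax (e π).1 i.rev) ∧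
        asc π.1 = des (e π).1 ∧ des π.1 = asc (e π).1 ∧
        MNA π.1 = MND (e π).1 ∧ MND π.1 = MNA (e π).1 := by
  refine ⟨GBij.gEquiv n, fun π => ?_⟩
  obtain ⟨h231, h312⟩ := π.2
  set D : Finset ℕ := descents π.1 with hDdef
  have hD : D ⊆ Finset.range (n - 1) := Finset.filter_subset _ _
  set M : Finset ℕ := (Finset.range (n - 1) \ D).image (GBij.rr n) with hMdef
  have hM : M ⊆ Finset.range (n - 1) := GBij.image_rr_subset Finset.sdiff_subset
  have hπ : π.1 = GBij.permD n D := GBij.eq_permD h231 h312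
  have hσ : (GBij.gEquiv n π).1 = GBij.permM n M := rfl
  have hdσ : descents (GBij.gEquiv n π).1 = M := by rw [hσ]; exact GBij.descents_permM hM
  have haσ : ascents (GBij.gEquiv n π).1 = D.image (GBij.rr n) := by
    rw [GBij.ascents_eq, hdσ, hMdef, GBij.sdiff_image_rr hD]
  have haπ : ascents π.1 = Finset.range (n - 1) \ D := by rw [GBij.ascents_eq, ← hDdef]
  refine ⟨?_, ?_, ?_, ?_, ?_⟩
  · intro i
    have h1 : IsLRMax π.1 i ↔ ((i : ℕ) = 0 ∨ ((i : ℕ) - 1) ∉ D) := by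
      rw [hπ]; exact GBij.isLRMax_permD D i
    have h2 : IsRLMax (GBij.gEquiv n π).1 i.rev ↔
        ((i.rev : ℕ) ∈ M ∨ (i.rev : ℕ) = n - 1) := by
      rw [hσ]; exact GBij.isRLMax_permM M i.rev
    rw [h1, h2, Fin.val_rev]
    have hi2 := i.2
    by_cases hi0 : (i : ℕ) = 0
    · exact iff_of_true (Or.inl hi0) (Or.inr (by omega))
    · have hn2 : 2 ≤ n := by omega
      have hrv : GBij.rr n (n - ((i : ℕ) + 1)) = (i : ℕ) - 1 := by unfold GBij.rr; omega
      constructor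
      · rintro (h0 | hnm)
        · exact absurd h0 hi0
        · left
          rw [hMdef, GBij.mem_image_rr Finset.sdiff_subset, hrv]
          exact ⟨by omega, Finset.mem_sdiff.mpr ⟨Finset.mem_range.mpr (by omega), hnm⟩⟩
      · rintro (hm | he)
        · right
          rw [hMdef, GBij.mem_image_rr Finset.sdiff_subset, hrv] at hm
          exact (Finset.mem_sdiff.mp hm.2).2
        · exact absurd he (by omega)
  · unfold asc des
    rw [haπ, hdσ, hMdef]
    exact (GBij.card_image_rr Finset.sdiff_subset).symm
  · unfold des asc
    rw [← hDdef, haσ]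
    exact (GBij.card_image_rr hD).symm
  · unfold MNA MND
    rw [haπ, hdσ, hMdef]
    exact congrArg sSup (GBij.nonoverlap_eq Finset.sdiff_subset)
  · unfold MND MNA
    rw [← hDdef, haσ]
    exact congrArg sSup (GBij.nonoverlap_eq hD)
end

section
/- The number of permutations in S_n(123,132) with exactly k right-to-left maxima equals C(n-1, k-1) for n ≥ 1 and 1 ≤ k ≤ n. -/
open Finset

namespace Av

variable {n : ℕ}

def Valid (π : Equiv.Perm (Fin n)) : Prop := ∀ i : Fin n, n ≤ (π i : ℕ) + i + 2

lemma card_lt_filter (i : Fin n) : (univ.filter fun m : Fin n => m < i).card = i := by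
  have : (univ.filter fun m : Fin n => m < i) = Finset.Iio i := by ext m; simp
  rw [this, Fin.card_Iio]

lemma card_B (π : Equiv.Perm (Fin n)) (i : Fin n) :
    (univ.filter fun m : Fin n => π i < π m).card + (π i : ℕ) + 1 = n := by
  have h1 : (univ.filter fun m : Fin n => π i < π m).card
      = (univ.filter fun v : Fin n => π i < v).card := by
    apply Finset.card_bij (fun m _ => π m)
    · intro a ha; simp only [mem_filter, mem_univ, true_and] at ha ⊢; exact ha
    · intro a _ b _ h; exact π.injective h
    · intro b hb; exact ⟨π.symm b, by simpa using hb, by simp⟩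
  rw [h1]
  have : (univ.filter fun v : Fin n => π i < v) = Finset.Ioi (π i) := by ext m; simp
  rw [this, Fin.card_Ioi]
  have := (π i).is_lt
  omega

lemma valid_no_pattern (π : Equiv.Perm (Fin n)) (hv : Valid π) :
    ¬ ∃ i j k : Fin n, i < j ∧ j < k ∧ π i < π j ∧ π i < π k := by
  rintro ⟨i, j, k, hij, hjk, h1, h2⟩
  set B := univ.filter fun m : Fin n => π i < π m with hBdef
  have hB : B.card + (π i : ℕ) + 1 = n := card_B π i
  set D := univ.filter fun m : Fin n => m < i ∧ π m < π i with hDdef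
  have hD : D.card ≤ (i : ℕ) - (n - 1 - (π i : ℕ)) := by
    have h : D.card ≤ (Finset.Ico (n - 1 - (π i : ℕ)) (i : ℕ)).card := by
      apply Finset.card_le_card_of_injOn (fun m : Fin n => (m : ℕ))
      · intro m hm
        simp only [Finset.mem_coe, hDdef, mem_filter, mem_univ, true_and] at hm
        obtain ⟨hmi, hpm⟩ := hm
        have hvm := hv m
        have hlt : (π m : ℕ) < (π i : ℕ) := hpm
        have hmi' : (m : ℕ) < (i : ℕ) := hmi
        simp only [Finset.mem_coe, Finset.mem_Ico]
        omega
      · intro a _ b _ hab; exact Fin.val_injective hab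
    simpa using h
  have hsplit : (univ.filter fun m : Fin n => m < i ∧ π i < π m).card + D.card = (i : ℕ) := by
    have hpart := Finset.card_filter_add_card_filter_not
      (s := univ.filter fun m : Fin n => m < i) (p := fun m => π i < π m)
    rw [Finset.filter_filter] at hpart
    have e2 : ((univ.filter fun m : Fin n => m < i).filter fun m => ¬ π i < π m) = D := by
      rw [Finset.filter_filter]
      ext m
      simp only [hDdef, mem_filter, mem_univ, true_and]
      constructor
      · rintro ⟨hm, hnp⟩
        refine ⟨hm, ?_⟩
        rcases lt_trichotomy (π m) (π i) with h | h | h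
        · exact h
        · exact absurd (π.injective h) (by intro e; subst e; exact absurd hm (lt_irrefl _))
        · exact absurd h hnp
      · rintro ⟨hm, hp⟩; exact ⟨hm, fun h => absurd (lt_trans h hp) (lt_irrefl _)⟩
    rw [e2, card_lt_filter] at hpart
    exact hpart
  have hBL : (univ.filter fun m : Fin n => m < i ∧ π i < π m).card + 2 ≤ B.card := by
    have hjB : j ∈ B := by simp [hBdef, h1]
    have hkB : k ∈ B := by simp [hBdef, h2]
    have hsub : insert j (insert k (univ.filter fun m : Fin n => m < i ∧ π i < π m)) ⊆ B := by
      intro x hx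
      simp only [Finset.mem_insert] at hx
      rcases hx with rfl | rfl | hx
      · exact hjB
      · exact hkB
      · simp only [mem_filter, mem_univ, true_and] at hx
        simp [hBdef, hx.2]
    have hk_nm : k ∉ (univ.filter fun m : Fin n => m < i ∧ π i < π m) := by
      simp only [mem_filter, mem_univ, true_and]
      rintro ⟨hk, -⟩
      exact absurd (lt_trans (lt_trans hij hjk) hk) (lt_irrefl _)
    have hj_nm : j ∉ insert k (univ.filter fun m : Fin n => m < i ∧ π i < π m) := by
      simp only [Finset.mem_insert, mem_filter, mem_univ, true_and]
      rintro (rfl | ⟨hj, -⟩)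
      · exact absurd hjk (lt_irrefl _)
      · exact absurd (lt_trans hij hj) (lt_irrefl _)
    calc (univ.filter fun m : Fin n => m < i ∧ π i < π m).card + 2
        = (insert j (insert k (univ.filter fun m : Fin n => m < i ∧ π i < π m))).card := by
          rw [Finset.card_insert_of_notMem hj_nm, Finset.card_insert_of_notMem hk_nm]
      _ ≤ B.card := Finset.card_le_card hsub
  have hvi := hv i
  have hpi : (π i : ℕ) < n := (π i).is_lt
  have hin : (i : ℕ) < n := i.is_lt
  omega

lemma valid_avoids (π : Equiv.Perm (Fin n)) (hv : Valid π) : Avoids123 π ∧ Avoids132 π := by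
  have h := valid_no_pattern π hv
  constructor
  · rintro ⟨i, j, k, hij, hjk, h1, h2⟩
    exact h ⟨i, j, k, hij, hjk, h1, lt_trans h1 h2⟩
  · rintro ⟨i, j, k, hij, hjk, h1, h2⟩
    exact h ⟨i, j, k, hij, hjk, lt_trans h1 h2, h1⟩

lemma avoids_valid (π : Equiv.Perm (Fin n)) (h123 : Avoids123 π) (h132 : Avoids132 π) :
    Valid π := by
  intro i
  by_contra hc
  push_neg at hc
  set A := univ.filter fun m : Fin n => π i < π m ∧ i < m with hAdef
  have hB : (univ.filter fun m : Fin n => π i < π m).card + (π i : ℕ) + 1 = n := card_B π i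
  have hA2 : 2 ≤ A.card := by
    have hpart := Finset.card_filter_add_card_filter_not
      (s := univ.filter fun m : Fin n => π i < π m) (p := fun m => i < m)
    rw [Finset.filter_filter] at hpart
    have hAeq : ((univ.filter fun m : Fin n => π i < π m).filter fun m => ¬ i < m)
        ⊆ univ.filter fun m : Fin n => m < i := by
      rw [Finset.filter_filter]
      intro m hm
      simp only [mem_filter, mem_univ, true_and] at hm ⊢
      rcases lt_trichotomy m i with h | h | h
      · exact h
      · exact absurd (h ▸ hm.1) (lt_irrefl _)
      · exact absurd h hm.2
    have hle := Finset.card_le_card hAeq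
    rw [card_lt_filter] at hle
    have hrw : (univ.filter fun a : Fin n => π i < π a ∧ i < a).card = A.card := rfl
    rw [hrw] at hpart
    have hin : (i : ℕ) < n := i.is_lt
    omega
  obtain ⟨j, hj, k, hk, hjk⟩ := Finset.one_lt_card.mp hA2
  simp only [hAdef, mem_filter, mem_univ, true_and] at hj hk
  rcases lt_or_gt_of_ne hjk with hlt | hgt
  · rcases lt_or_gt_of_ne (fun e : π j = π k => hjk (π.injective e)) with hp | hp
    · exact h123 ⟨i, j, k, hj.2, hlt, hj.1, hp⟩
    · exact h132 ⟨i, j, k, hj.2, hlt, hk.1, hp⟩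
  · rcases lt_or_gt_of_ne (fun e : π k = π j => hjk (π.injective e).symm) with hp | hp
    · exact h123 ⟨i, k, j, hk.2, hgt, hk.1, hp⟩
    · exact h132 ⟨i, k, j, hk.2, hgt, hj.1, hp⟩

lemma rlmax_of (π : Equiv.Perm (Fin n)) (h123 : Avoids123 π) (i : Fin n)
    (hi : n ≤ (π i : ℕ) + i + 1) : IsRLMax π i := by
  intro j hij
  by_contra hcj
  have hne : π i ≠ π j := fun e => absurd (π.injective e) (by intro e'; subst e'; exact absurd hij (lt_irrefl _))
  have hlt : π i < π j := by
    rcases lt_trichotomy (π i) (π j) with h | h | h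
    · exact h
    · exact absurd h hne
    · exact absurd h hcj
  by_cases hm : ∃ m : Fin n, m < i ∧ π m < π i
  · obtain ⟨m, hmi, hpm⟩ := hm
    exact h123 ⟨m, i, j, hmi, hij, hpm, hlt⟩
  · push_neg at hm
    set B := univ.filter fun m : Fin n => π i < π m with hBdef
    have hB : B.card + (π i : ℕ) + 1 = n := card_B π i
    have hsub : insert j (univ.filter fun m : Fin n => m < i) ⊆ B := by
      intro x hx
      simp only [Finset.mem_insert, mem_filter, mem_univ, true_and] at hx
      rcases hx with rfl | hx
      · simp [hBdef, hlt]
      · simp only [hBdef, mem_filter, mem_univ, true_and]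
        have hne' : π i ≠ π x := fun e => absurd (π.injective e)
          (by intro e'; subst e'; exact absurd hx (lt_irrefl _))
        rcases lt_trichotomy (π i) (π x) with h | h | h
        · exact h
        · exact absurd h hne'
        · exact absurd h (not_lt.mpr (hm x hx))
    have hnj : j ∉ (univ.filter fun m : Fin n => m < i) := by
      simp only [mem_filter, mem_univ, true_and]
      intro h; exact absurd (lt_trans hij h) (lt_irrefl _)
    have hcard := Finset.card_le_card hsub
    rw [Finset.card_insert_of_notMem hnj, card_lt_filter] at hcard
    omega

lemma of_rlmax (π : Equiv.Perm (Fin n)) (hv : Valid π) (i : Fin n)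
    (h : IsRLMax π i) : n ≤ (π i : ℕ) + i + 1 := by
  by_contra hc
  push_neg at hc
  set B := univ.filter fun m : Fin n => π i < π m with hBdef
  have hB : B.card + (π i : ℕ) + 1 = n := card_B π i
  have hsub : B ⊆ univ.filter fun m : Fin n => m < i := by
    intro m hm
    simp only [hBdef, mem_filter, mem_univ, true_and] at hm ⊢
    rcases lt_trichotomy m i with h' | h' | h'
    · exact h'
    · subst h'; exact absurd hm (lt_irrefl _)
    · exact absurd (lt_trans hm (h m h')) (lt_irrefl _)
  have hcard := Finset.card_le_card hsub
  rw [card_lt_filter] at hcard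
  have hvi := hv i
  omega

def Fp (π : Equiv.Perm (Fin n)) : Finset ℕ :=
  (Finset.range (n - 1)).filter fun i => n ≤ pv π i + i + 1

lemma mem_Fp {π : Equiv.Perm (Fin n)} {b : ℕ} :
    b ∈ Fp π ↔ b < n - 1 ∧ n ≤ pv π b + b + 1 := by
  simp [Fp]

lemma pv_eq (π : Equiv.Perm (Fin n)) (i : Fin n) : pv π (i : ℕ) = (π i : ℕ) := by
  simp [pv, i.is_lt, Fin.eta]

lemma rlmax_eq (hn : 1 ≤ n) (π : Equiv.Perm (Fin n)) (hv : Valid π) (h123 : Avoids123 π) :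
    rlmax π = (Fp π).card + 1 := by
  classical
  have h1 : rlmax π = (univ.filter fun i : Fin n => IsRLMax π i).card := by
    rw [rlmax, Nat.card_eq_fintype_card, Fintype.card_subtype]
  have h2 : (univ.filter fun i : Fin n => IsRLMax π i)
      = univ.filter fun i : Fin n => n ≤ (π i : ℕ) + i + 1 := by
    ext i
    simp only [mem_filter, mem_univ, true_and]
    exact ⟨of_rlmax π hv i, rlmax_of π h123 i⟩
  have h3 : (univ.filter fun i : Fin n => n ≤ (π i : ℕ) + i + 1).card
      = (insert (n - 1) (Fp π)).card := by
    apply Finset.card_bij (fun (i : Fin n) _ => (i : ℕ))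
    · intro a ha
      simp only [mem_filter, mem_univ, true_and] at ha
      rcases eq_or_lt_of_le (Nat.le_of_lt_succ (by omega : (a : ℕ) < (n - 1) + 1)) with he | hl
      · simp [he]
      · simp only [Finset.mem_insert, mem_Fp]
        right
        refine ⟨hl, ?_⟩
        rw [pv_eq]
        exact ha
    · intro a _ b _ hab; exact Fin.val_injective hab
    · intro b hb
      simp only [Finset.mem_insert, mem_Fp] at hb
      rcases hb with rfl | ⟨hb1, hb2⟩
      · refine ⟨⟨n - 1, by omega⟩, ?_, rfl⟩
        simp only [mem_filter, mem_univ, true_and]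
        omega
      · refine ⟨⟨b, by omega⟩, ?_, rfl⟩
        simp only [mem_filter, mem_univ, true_and]
        have := pv_eq π ⟨b, by omega⟩
        simp only at this
        omega
  rw [h1, h2, h3, Finset.card_insert_of_notMem]
  intro hmem
  rw [mem_Fp] at hmem
  omega

lemma inj_Fp_aux (hn : 1 ≤ n) (π σ : Equiv.Perm (Fin n)) (hπ : Valid π) (hσ : Valid σ)
    (h123 : Avoids123 π) (h : Fp π = Fp σ) (i : Fin n)
    (hagree : ∀ j : Fin n, j < i → π j = σ j) (hlt : π i < σ i) : False := by
  set m := π.symm (σ i) with hmdef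
  have hm : π m = σ i := π.apply_symm_apply (σ i)
  have hmne : m ≠ i := by
    intro e
    rw [e] at hm
    exact absurd hm (ne_of_lt hlt)
  have hmi : i < m := by
    rcases lt_trichotomy m i with h' | h' | h'
    · exfalso
      have := hagree m h'
      rw [this] at hm
      exact hmne (σ.injective hm)
    · exact absurd h' hmne
    · exact h'
  have hiltn : (i : ℕ) < n - 1 := by
    have := m.is_lt
    have : (i : ℕ) < (m : ℕ) := hmi
    have := m.is_lt
    omega
  by_cases hF : (i : ℕ) ∈ Fp π
  · rw [mem_Fp] at hF
    have hrl : IsRLMax π i := by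
      apply rlmax_of π h123 i
      have := pv_eq π i
      omega
    have := hrl m hmi
    rw [hm] at this
    exact absurd (lt_trans hlt this) (lt_irrefl _)
  · have hFσ : (i : ℕ) ∉ Fp σ := h ▸ hF
    rw [mem_Fp] at hF hFσ
    push_neg at hF hFσ
    have h1 := hF hiltn
    have h2 := hFσ hiltn
    have e1 := pv_eq π i
    have e2 := pv_eq σ i
    have v1 := hπ i
    have v2 := hσ i
    have : (π i : ℕ) = (σ i : ℕ) := by omega
    exact absurd this (ne_of_lt hlt)

lemma inj_Fp (hn : 1 ≤ n) (π σ : Equiv.Perm (Fin n)) (hπ : Valid π) (hσ : Valid σ)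
    (h123π : Avoids123 π) (h123σ : Avoids123 σ) (h : Fp π = Fp σ) : π = σ := by
  classical
  have key : ∀ N : ℕ, ∀ i : Fin n, (i : ℕ) = N → π i = σ i := by
    intro N
    induction N using Nat.strong_induction_on with
    | _ N IH =>
      intro i hi
      have hagree : ∀ j : Fin n, j < i → π j = σ j := by
        intro j hj
        exact IH (j : ℕ) (hi ▸ hj) j rfl
      rcases lt_trichotomy (π i) (σ i) with h' | h' | h'
      · exact absurd (inj_Fp_aux hn π σ hπ hσ h123π h i hagree h') not_false
      · exact h'
      · exact absurd (inj_Fp_aux hn σ π hσ hπ h123σ h.symm i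
          (fun j hj => (hagree j hj).symm) h') not_false
  exact Equiv.ext fun i => key (i : ℕ) i rfl

def fval (n : ℕ) (S : Finset ℕ) (i : ℕ) : ℕ :=
  if i ∈ insert (n - 1) S then
    (if h : (((insert (n - 1) S).filter (· < i)).Nonempty)
      then n - 2 - ((insert (n - 1) S).filter (· < i)).max' h
      else n - 1)
  else n - 2 - i

section Constr

variable {S : Finset ℕ}

lemma hC_le (S : Finset ℕ) (hS : S ⊆ Finset.range (n - 1)) : ∀ x ∈ insert (n - 1) S, x ≤ n - 1 := by
  intro x hx
  rcases Finset.mem_insert.mp hx with rfl | hx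
  · exact le_refl _
  · have := hS hx; rw [Finset.mem_range] at this; omega

lemma fval_le (S : Finset ℕ) (i : ℕ) : fval n S i ≤ n - 1 := by
  unfold fval
  split
  · split <;> omega
  · omega

lemma fval_notC (S : Finset ℕ) {i : ℕ} (hi : i ∉ insert (n - 1) S) : fval n S i = n - 2 - i := by
  unfold fval
  rw [if_neg hi]

lemma fval_mixed (S : Finset ℕ) (hS : S ⊆ Finset.range (n - 1)) {i j : ℕ} (hi : i ∉ insert (n - 1) S) (hj : j ∈ insert (n - 1) S)
    (hin : i < n) : fval n S i ≠ fval n S j := by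
  have hi' : i ≠ n - 1 := fun e => hi (e ▸ Finset.mem_insert_self _ _)
  have hile : i ≤ n - 2 := by omega
  have hn2 : 2 ≤ n := by omega
  rw [fval_notC S hi]
  unfold fval
  rw [if_pos hj]
  split
  · next h =>
    set p := ((insert (n - 1) S).filter (· < j)).max' h with hp
    have hpmem := ((insert (n - 1) S).filter (· < j)).max'_mem h
    rw [Finset.mem_filter] at hpmem
    have hpC := hpmem.1
    have hpj : p < j := hpmem.2
    have hjle : j ≤ n - 1 := hC_le S hS j hj
    have hple : p ≤ n - 2 := by omega
    intro he
    have : i = p := by omega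
    exact hi (this ▸ hpC)
  · omega

lemma fval_C_lt (S : Finset ℕ) (hS : S ⊆ Finset.range (n - 1)) {i j : ℕ} (hi : i ∈ insert (n - 1) S) (hj : j ∈ insert (n - 1) S)
    (hij : i < j) : fval n S i ≠ fval n S j := by
  have hjle : j ≤ n - 1 := hC_le S hS j hj
  have hn2 : 2 ≤ n := by omega
  have hne : (((insert (n - 1) S).filter (· < j)).Nonempty) :=
    ⟨i, Finset.mem_filter.mpr ⟨hi, by simpa using hij⟩⟩
  have hpj_mem := ((insert (n - 1) S).filter (· < j)).max'_mem hne
  rw [Finset.mem_filter] at hpj_mem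
  have hpj_ge : i ≤ ((insert (n - 1) S).filter (· < j)).max' hne :=
    Finset.le_max' _ i (Finset.mem_filter.mpr ⟨hi, by simpa using hij⟩)
  have hpj_lt : ((insert (n - 1) S).filter (· < j)).max' hne < j := by
    simpa using hpj_mem.2
  conv_rhs => unfold fval
  rw [if_pos hj, dif_pos hne]
  unfold fval
  rw [if_pos hi]
  split
  · next h =>
    have hpi_mem := ((insert (n - 1) S).filter (· < i)).max'_mem h
    rw [Finset.mem_filter] at hpi_mem
    have hpi_lt : ((insert (n - 1) S).filter (· < i)).max' h < i := by
      simpa using hpi_mem.2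
    omega
  · omega

lemma fval_inj (S : Finset ℕ) (hS : S ⊆ Finset.range (n - 1)) {i j : ℕ} (hin : i < n) (hjn : j < n) (he : fval n S i = fval n S j) :
    i = j := by
  by_cases hi : i ∈ insert (n - 1) S <;> by_cases hj : j ∈ insert (n - 1) S
  · rcases lt_trichotomy i j with h | h | h
    · exact absurd he (fval_C_lt S hS hi hj h)
    · exact h
    · exact absurd he.symm (fval_C_lt S hS hj hi h)
  · exact absurd he.symm (fval_mixed S hS hj hi hjn)
  · exact absurd he (fval_mixed S hS hi hj hin)
  · have hi' : i ≠ n - 1 := fun e => hi (e ▸ Finset.mem_insert_self _ _)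
    have hj' : j ≠ n - 1 := fun e => hj (e ▸ Finset.mem_insert_self _ _)
    rw [fval_notC S hi, fval_notC S hj] at he
    omega

lemma fval_valid (S : Finset ℕ) (hS : S ⊆ Finset.range (n - 1)) {i : ℕ} (hin : i < n) : n ≤ fval n S i + i + 2 := by
  by_cases hi : i ∈ insert (n - 1) S
  · unfold fval
    rw [if_pos hi]
    split
    · next h =>
      have hpmem := ((insert (n - 1) S).filter (· < i)).max'_mem h
      rw [Finset.mem_filter] at hpmem
      have h1 := hC_le S hS _ hpmem.1
      have h2 : ((insert (n - 1) S).filter (· < i)).max' h < i := by simpa using hpmem.2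
      omega
    · omega
  · have hi' : i ≠ n - 1 := fun e => hi (e ▸ Finset.mem_insert_self _ _)
    rw [fval_notC S hi]
    omega

lemma fval_big (S : Finset ℕ) (hS : S ⊆ Finset.range (n - 1)) {i : ℕ} (hi : i ∈ insert (n - 1) S) (hin : i < n) :
    n ≤ fval n S i + i + 1 := by
  unfold fval
  rw [if_pos hi]
  split
  · next h =>
    have hpmem := ((insert (n - 1) S).filter (· < i)).max'_mem h
    rw [Finset.mem_filter] at hpmem
    have h1 := hC_le S hS _ hpmem.1
    have h2 : ((insert (n - 1) S).filter (· < i)).max' h < i := by simpa using hpmem.2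
    omega
  · omega

noncomputable def gperm (S : Finset ℕ) (hS : S ⊆ Finset.range (n - 1)) : Equiv.Perm (Fin n) := by
  apply Equiv.ofBijective (fun i : Fin n => (⟨fval n S (i : ℕ), by
    have h1 := fval_le (n := n) S (i : ℕ); have h2 := i.is_lt; omega⟩ : Fin n))
  rw [Fintype.bijective_iff_injective_and_card]
  refine ⟨?_, rfl⟩
  intro a b hab
  have : fval n S (a : ℕ) = fval n S (b : ℕ) := by
    simpa [Fin.mk.injEq] using hab
  exact Fin.val_injective (fval_inj S hS a.is_lt b.is_lt this)

lemma gperm_apply (S : Finset ℕ) (hS : S ⊆ Finset.range (n - 1)) (i : Fin n) : ((gperm S hS) i : ℕ) = fval n S (i : ℕ) := rfl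

lemma gperm_valid (S : Finset ℕ) (hS : S ⊆ Finset.range (n - 1)) : Valid (gperm S hS) := by
  intro i
  rw [gperm_apply]
  exact fval_valid S hS i.is_lt

lemma gperm_Fp (S : Finset ℕ) (hS : S ⊆ Finset.range (n - 1)) : Fp (gperm S hS) = S := by
  ext b
  rw [mem_Fp]
  constructor
  · rintro ⟨hb1, hb2⟩
    have hbn : b < n := by omega
    rw [pv] at hb2
    rw [dif_pos hbn] at hb2
    have hb2' : n ≤ fval n S b + b + 1 := by
      have := gperm_apply S hS ⟨b, hbn⟩
      simp only at this
      omega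
    by_contra hbS
    have hbC : b ∉ insert (n - 1) S := by
      simp only [Finset.mem_insert]
      rintro (rfl | h)
      · omega
      · exact hbS h
    rw [fval_notC S hbC] at hb2'
    omega
  · intro hbS
    have hb1 : b < n - 1 := by have := hS hbS; rwa [Finset.mem_range] at this
    have hbn : b < n := by omega
    refine ⟨hb1, ?_⟩
    rw [pv, dif_pos hbn]
    have := gperm_apply S hS ⟨b, hbn⟩
    simp only at this
    rw [this]
    exact fval_big S hS (Finset.mem_insert_of_mem hbS) hbn

end Constr

end Av

theorem card_avoid_123_132_with_rlmax (n k : ℕ) (hn : 1 ≤ n) (hk1 : 1 ≤ k) (hk2 : k ≤ n) :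
    Nat.card {π : Equiv.Perm (Fin n) // (Avoids123 π ∧ Avoids132 π) ∧ rlmax π = k} =
      Nat.choose (n - 1) (k - 1) := by
  classical
  have hval : ∀ π : Equiv.Perm (Fin n), (Avoids123 π ∧ Avoids132 π) → Av.Valid π :=
    fun π h => Av.avoids_valid π h.1 h.2
  let Φ : {π : Equiv.Perm (Fin n) // (Avoids123 π ∧ Avoids132 π) ∧ rlmax π = k} →
      {S : Finset ℕ // S ∈ (Finset.range (n - 1)).powersetCard (k - 1)} := fun π =>
    ⟨Av.Fp π.1, by
      rw [Finset.mem_powersetCard]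
      constructor
      · exact Finset.filter_subset _ _
      · have hv := hval π.1 π.2.1
        have h1 := Av.rlmax_eq hn π.1 hv π.2.1.1
        have hk := π.2.2
        omega⟩
  have hbij : Function.Bijective Φ := by
    constructor
    · rintro ⟨π, hπ⟩ ⟨σ, hσ⟩ h
      have h' : Av.Fp π = Av.Fp σ := congrArg Subtype.val h
      exact Subtype.ext (Av.inj_Fp hn π σ (hval π hπ.1) (hval σ hσ.1) hπ.1.1 hσ.1.1 h')
    · rintro ⟨S, hSmem⟩
      rw [Finset.mem_powersetCard] at hSmem
      obtain ⟨hS, hcard⟩ := hSmem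
      have hv := Av.gperm_valid S hS
      have hav := Av.valid_avoids _ hv
      have hFp := Av.gperm_Fp S hS
      have hrl : rlmax (Av.gperm S hS) = k := by
        rw [Av.rlmax_eq hn _ hv hav.1, hFp, hcard]; omega
      refine ⟨⟨Av.gperm S hS, ⟨hav, hrl⟩⟩, ?_⟩
      exact Subtype.ext hFp
  rw [Nat.card_congr (Equiv.ofBijective Φ hbij)]
  rw [Nat.card_eq_fintype_card, Fintype.card_coe, Finset.card_powersetCard, Finset.card_range]
end
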